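/- Electric energy variation identity: if C_0, C_1 are C¹ functions on [0,∞) × ℝ, L-periodic in x, satisfying the continuity equation ∂_t C_0 + v_th ∂_x C_1 = 0, and Φ is a C² function on [0,∞) × ℝ, L-periodic in x, with E := −∂_x Φ satisfying the Poisson equation ∂_x E = v_th C_0 − ρ0, then for all t ≥ 0: (1/2) · d/dt ∫_0^L E(t,x)² dx = −v_th² ∫_0^L C_1(t,x) E(t,x) dx. -/

import Mathlib

open MeasureTheory intervalIntegral

section Aux
open Metric

/-- Partial derivative in the first variable. -/
lemma hasDerivAt_partial_fst (f : ℝ × ℝ → ℝ) (t x : ℝ)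
    (hf : DifferentiableAt ℝ f (t, x)) :
    HasDerivAt (fun s => f (s, x)) (fderiv ℝ f (t, x) (1, 0)) t :=
  hf.hasFDerivAt.comp_hasDerivAt t ((hasDerivAt_id t).prodMk (hasDerivAt_const t x))

/-- Partial derivative in the second variable. -/
lemma hasDerivAt_partial_snd (f : ℝ × ℝ → ℝ) (t x : ℝ)
    (hf : DifferentiableAt ℝ f (t, x)) :
    HasDerivAt (fun y => f (t, y)) (fderiv ℝ f (t, x) (0, 1)) x :=
  hf.hasFDerivAt.comp_hasDerivAt x ((hasDerivAt_const x t).prodMk (hasDerivAt_id x))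

/-- Differentiation under the interval integral sign, continuous version. -/
lemma param_hasDerivAt (f g : ℝ × ℝ → ℝ) (hf : Continuous f) (hg : Continuous g)
    (hfg : ∀ p : ℝ × ℝ, HasDerivAt (fun s => f (s, p.2)) (g p) p.1)
    (a b t : ℝ) :
    HasDerivAt (fun s => ∫ x in a..b, f (s, x)) (∫ x in a..b, g (t, x)) t := by
  have hK : IsCompact ((Set.Icc (t - 1) (t + 1)) ×ˢ (Set.uIcc a b)) :=
    isCompact_Icc.prod isCompact_uIcc
  obtain ⟨C, hC⟩ := hK.exists_bound_of_continuousOn hg.continuousOn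
  have h := intervalIntegral.hasDerivAt_integral_of_dominated_loc_of_deriv_le
    (F := fun s x => f (s, x)) (F' := fun s x => g (s, x)) (bound := fun _ => C)
    (x₀ := t) (a := a) (b := b) (μ := MeasureTheory.volume) (s := Metric.ball t 1) (Metric.ball_mem_nhds t one_pos)
    ?_ ?_ ?_ ?_ ?_ ?_
  · exact h.2
  · filter_upwards with s
    exact ((hf.comp (continuous_const.prodMk continuous_id)).aestronglyMeasurable)
  · exact (hf.comp (continuous_const.prodMk continuous_id)).intervalIntegrable a b
  · exact (hg.comp (continuous_const.prodMk continuous_id)).aestronglyMeasurable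
  · filter_upwards with x hx s hs
    refine hC (s, x) ⟨?_, Set.uIoc_subset_uIcc hx⟩
    have := abs_lt.1 (by simpa [Real.dist_eq] using hs)
    exact ⟨by linarith [this.1], by linarith [this.2]⟩
  · exact intervalIntegrable_const
  · filter_upwards with x _ s _
    exact hfg (s, x)

end Aux

/-- Electric energy variation identity: if `∂_t C_0 + v_th ∂_x C_1 = 0` and
`E = −∂_x Φ` satisfies the Poisson equation `∂_x E = v_th C_0 − ρ0`, then
`(1/2) d/dt ∫_0^L E² dx = −v_th² ∫_0^L C_1 E dx`. -/
theorem electric_energy_variation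
    (L vth ρ0 : ℝ) (hL : 0 < L) (hvth : 0 < vth)
    (C0 C1 : ℝ → ℝ → ℝ) (Φ E : ℝ → ℝ → ℝ)
    -- regularity: `C_0`, `C_1` are C¹ in (t,x), `Φ` is C²
    (hC0 : ContDiff ℝ 1 (fun p : ℝ × ℝ => C0 p.1 p.2))
    (hC1 : ContDiff ℝ 1 (fun p : ℝ × ℝ => C1 p.1 p.2))
    (hΦ : ContDiff ℝ 2 (fun p : ℝ × ℝ => Φ p.1 p.2))
    -- L-periodicity in space
    (hC0per : ∀ t, Function.Periodic (fun x => C0 t x) L)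
    (hC1per : ∀ t, Function.Periodic (fun x => C1 t x) L)
    (hΦper : ∀ t, Function.Periodic (fun x => Φ t x) L)
    -- the electric field `E := −∂_x Φ`
    (hE : ∀ t x, E t x = -deriv (fun y => Φ t y) x)
    -- the continuity equation
    (hcont : ∀ t x,
      deriv (fun s => C0 s x) t + vth * deriv (fun y => C1 t y) x = 0)
    -- the Poisson equation
    (hPoisson : ∀ t x, deriv (fun y => E t y) x = vth * C0 t x - ρ0) :
    ∀ t, 0 ≤ t →
      (1 / 2) * deriv (fun s => ∫ x in (0:ℝ)..L, (E s x) ^ 2) t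
        = -(vth ^ 2) * ∫ x in (0:ℝ)..L, C1 t x * E t x := by
  intro t ht
  set Φj : ℝ × ℝ → ℝ := fun p => Φ p.1 p.2 with hΦjdef
  set C0j : ℝ × ℝ → ℝ := fun p => C0 p.1 p.2 with hC0jdef
  set C1j : ℝ × ℝ → ℝ := fun p => C1 p.1 p.2 with hC1jdef
  have hΦdiff : Differentiable ℝ Φj := hΦ.differentiable two_ne_zero
  set Ej : ℝ × ℝ → ℝ := fun p => -(fderiv ℝ Φj p (0, 1)) with hEjdef
  have hEj : ContDiff ℝ 1 Ej :=
    ((hΦ.fderiv_right (by norm_num)).clm_apply contDiff_const).neg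
  have hEdiff : Differentiable ℝ Ej := hEj.differentiable one_ne_zero
  -- E agrees with the joint C¹ function Ej
  have hEeq : ∀ s x, E s x = Ej (s, x) := by
    intro s x
    have hd : HasDerivAt (fun y => Φ s y) (fderiv ℝ Φj (s, x) (0, 1)) x :=
      hasDerivAt_partial_snd Φj s x (hΦdiff (s, x))
    rw [hE, hd.deriv]
  -- spatial derivative of E : Poisson
  have hEx : ∀ s x, HasDerivAt (fun y => E s y) (vth * C0 s x - ρ0) x := by
    intro s x
    have h2 : HasDerivAt (fun y => E s y) (fderiv ℝ Ej (s, x) (0, 1)) x := by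
      have h := hasDerivAt_partial_snd Ej s x (hEdiff (s, x))
      have : (fun y => Ej (s, y)) = fun y => E s y := funext fun y => (hEeq s y).symm
      rwa [this] at h
    have h3 : fderiv ℝ Ej (s, x) (0, 1) = vth * C0 s x - ρ0 := by
      rw [← h2.deriv]; exact hPoisson s x
    exact h3 ▸ h2
  -- time derivative of E
  have hEt : ∀ s x, HasDerivAt (fun u => E u x) (fderiv ℝ Ej (s, x) (1, 0)) s := by
    intro s x
    have h := hasDerivAt_partial_fst Ej s x (hEdiff (s, x))
    have : (fun u => Ej (u, x)) = fun u => E u x := funext fun u => (hEeq u x).symm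
    rwa [this] at h
  set Et : ℝ → ℝ → ℝ := fun s x => fderiv ℝ Ej (s, x) (1, 0) with hEtdef
  -- partial derivatives of C0, C1
  have hC0t : ∀ s x, HasDerivAt (fun u => C0 u x) (fderiv ℝ C0j (s, x) (1, 0)) s :=
    fun s x => hasDerivAt_partial_fst C0j s x ((hC0.differentiable one_ne_zero) (s, x))
  have hC1x : ∀ s x, HasDerivAt (fun y => C1 s y) (fderiv ℝ C1j (s, x) (0, 1)) x :=
    fun s x => hasDerivAt_partial_snd C1j s x ((hC1.differentiable one_ne_zero) (s, x))
  -- continuity equation in fderiv form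
  have hcont' : ∀ s x, fderiv ℝ C0j (s, x) (1, 0) = -vth * fderiv ℝ C1j (s, x) (0, 1) := by
    intro s x
    have h := hcont s x
    rw [(hC0t s x).deriv, (hC1x s x).deriv] at h
    linarith
  -- continuity of various functions
  have hEjc : Continuous Ej := hEj.continuous
  have hC0c : Continuous C0j := hC0.continuous
  have hC1c : Continuous C1j := hC1.continuous
  have hC0tc : Continuous (fun p : ℝ × ℝ => fderiv ℝ C0j p (1, 0)) :=
    (hC0.continuous_fderiv one_ne_zero).clm_apply continuous_const
  have hEtc : Continuous (fun p : ℝ × ℝ => fderiv ℝ Ej p (1, 0)) :=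
    (hEj.continuous_fderiv one_ne_zero).clm_apply continuous_const
  -- FTC from Poisson
  have hFTC : ∀ s x, (∫ y in (0:ℝ)..x, (vth * C0 s y - ρ0)) = E s x - E s 0 := by
    intro s x
    refine intervalIntegral.integral_eq_sub_of_hasDerivAt (fun y _ => hEx s y) ?_
    have hc : Continuous fun y => vth * C0 s y - ρ0 :=
      (continuous_const.mul (hC0c.comp (continuous_const.prodMk continuous_id))).sub continuous_const
    exact hc.intervalIntegrable 0 x
  -- FTC for C1
  have hFTC1 : ∀ x, (∫ y in (0:ℝ)..x, fderiv ℝ C1j (t, y) (0, 1)) = C1 t x - C1 t 0 := by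
    intro x
    refine intervalIntegral.integral_eq_sub_of_hasDerivAt (fun y _ => hC1x t y) ?_
    have hc : Continuous fun y => fderiv ℝ C1j (t, y) (0, 1) :=
      (((hC1.continuous_fderiv one_ne_zero).clm_apply continuous_const).comp
        (continuous_const.prodMk continuous_id))
    exact hc.intervalIntegrable 0 x
  -- differentiate the Poisson FTC identity in time
  have key : ∀ x, Et t x = -vth ^ 2 * C1 t x + (Et t 0 + vth ^ 2 * C1 t 0) := by
    intro x
    have hG : HasDerivAt (fun s => ∫ y in (0:ℝ)..x, (vth * C0 s y - ρ0))
        (∫ y in (0:ℝ)..x, vth * fderiv ℝ C0j (t, y) (1, 0)) t := by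
      refine param_hasDerivAt (fun p => vth * C0 p.1 p.2 - ρ0)
        (fun p => vth * fderiv ℝ C0j p (1, 0)) ?_ ?_ ?_ 0 x t
      · exact (continuous_const.mul hC0c).sub continuous_const
      · exact continuous_const.mul hC0tc
      · intro p
        exact ((hC0t p.1 p.2).const_mul vth).sub_const ρ0
    have hfun : (fun s => ∫ y in (0:ℝ)..x, (vth * C0 s y - ρ0))
        = fun s => E s x - E s 0 := funext fun s => hFTC s x
    rw [hfun] at hG
    have hG2 : HasDerivAt (fun s => E s x - E s 0) (Et t x - Et t 0) t :=
      (hEt t x).sub (hEt t 0)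
    have huniq := hG2.unique hG
    have hint : (∫ y in (0:ℝ)..x, vth * fderiv ℝ C0j (t, y) (1, 0))
        = -vth ^ 2 * (C1 t x - C1 t 0) := by
      have hcongr : (∫ y in (0:ℝ)..x, vth * fderiv ℝ C0j (t, y) (1, 0))
          = ∫ y in (0:ℝ)..x, (-vth ^ 2) * fderiv ℝ C1j (t, y) (0, 1) := by
        refine intervalIntegral.integral_congr fun y _ => ?_
        rw [hcont' t y]; ring
      rw [hcongr, intervalIntegral.integral_const_mul, hFTC1]
    rw [hint] at huniq
    linarith [huniq]
  -- derivative of the energy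
  have hF : HasDerivAt (fun s => ∫ x in (0:ℝ)..L, (E s x) ^ 2)
      (∫ x in (0:ℝ)..L, 2 * Ej (t, x) * Et t x) t := by
    have h := param_hasDerivAt (fun p => Ej p ^ 2)
      (fun p => 2 * Ej p * fderiv ℝ Ej p (1, 0))
      (hEjc.pow 2) (((continuous_const.mul hEjc).mul hEtc)) ?_ 0 L t
    · have hfun : (fun s => ∫ x in (0:ℝ)..L, Ej (s, x) ^ 2)
          = fun s => ∫ x in (0:ℝ)..L, (E s x) ^ 2 := by
        funext s
        exact intervalIntegral.integral_congr fun x _ => by rw [hEeq]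
      rwa [hfun] at h
    · intro p
      have h1 : HasDerivAt (fun s => Ej (s, p.2)) (Et p.1 p.2) p.1 := by
        have h := hEt p.1 p.2
        have : (fun u => E u p.2) = fun u => Ej (u, p.2) := funext fun u => hEeq u p.2
        rwa [this] at h
      have := h1.pow 2
      simpa [Pi.pow_def, hEtdef, mul_comm, mul_assoc, mul_left_comm] using this
  -- the mean of E vanishes by periodicity of Φ
  have hEmean : (∫ x in (0:ℝ)..L, E t x) = 0 := by
    have hd : ∀ y ∈ Set.uIcc (0:ℝ) L, HasDerivAt (fun y => Φ t y) (-(E t y)) y := by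
      intro y _
      have hd : HasDerivAt (fun y => Φ t y) (fderiv ℝ Φj (t, y) (0, 1)) y :=
        hasDerivAt_partial_snd Φj t y (hΦdiff (t, y))
      have : -(E t y) = fderiv ℝ Φj (t, y) (0, 1) := by rw [hEeq]; simp [hEjdef]
      rw [this]; exact hd
    have hInt : IntervalIntegrable (fun y => -(E t y)) volume 0 L := by
      have : Continuous fun y => -(E t y) := by
        have : Continuous fun y => E t y := by
          have := hEjc.comp (Continuous.prodMk (continuous_const (y := t)) continuous_id)
          simpa [hEeq, Function.comp_def] using this.neg.neg
        exact this.neg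
      exact this.intervalIntegrable 0 L
    have := intervalIntegral.integral_eq_sub_of_hasDerivAt hd hInt
    have hper : Φ t L = Φ t 0 := by simpa using hΦper t 0
    rw [hper, sub_self] at this
    rw [intervalIntegral.integral_neg] at this
    linarith [this]
  -- put everything together
  rw [hF.deriv]
  have hsplit : (∫ x in (0:ℝ)..L, 2 * Ej (t, x) * Et t x)
      = (∫ x in (0:ℝ)..L, (-2 * vth ^ 2) * (C1 t x * E t x))
        + ∫ x in (0:ℝ)..L, (2 * (Et t 0 + vth ^ 2 * C1 t 0)) * E t x := by
    rw [← intervalIntegral.integral_add]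
    · refine intervalIntegral.integral_congr fun x _ => ?_
      rw [← hEeq, key x]; ring
    · have : Continuous fun x => (-2 * vth ^ 2) * (C1 t x * E t x) := by
        have hc1 : Continuous fun x => C1 t x :=
          hC1c.comp (continuous_const.prodMk continuous_id)
        have he : Continuous fun x => E t x := by
          have := hEjc.comp (Continuous.prodMk (continuous_const (y := t)) continuous_id)
          simpa [hEeq, Function.comp_def] using this
        exact continuous_const.mul (hc1.mul he)
      exact this.intervalIntegrable 0 L
    · have he : Continuous fun x => E t x := by
        have := hEjc.comp (Continuous.prodMk (continuous_const (y := t)) continuous_id)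
        simpa [hEeq, Function.comp_def] using this
      exact (continuous_const.mul he).intervalIntegrable 0 L
  rw [hsplit, intervalIntegral.integral_const_mul, intervalIntegral.integral_const_mul,
    hEmean]
  ring
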